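/- Let γ = (θ, σ²), and define V_{γ₀} as the block-diagonal matrix with blocks σ*^{-2} V_{θ₀} and σ*^{-4}/2, where V_{θ₀} = ∫₀¹ ( (∂f_{θ₀}/∂θ)(t)ᵀ (∂f_{θ₀}/∂θ)(t) − ∂/∂θ [ (∂f_θ/∂θ)(t)ᵀ (f₀(t) − f_{θ₀}(t)) ]|_{θ=θ₀} ) g(t) dt. If f_θ is twice continuously differentiable in θ and f₀, f_θ are continuous in t, then the second-order Taylor expansion of the misspecified Kullback–Leibler function γ ↦ −P₀ log(p_γ/p_{γ₀}) around γ₀ satisfies −P₀ log(p_γ/p_{γ₀}) = (1/2)(γ − γ₀)ᵀ V_{γ₀} (γ − γ₀) + o(‖γ − γ₀‖²) as γ → γ₀, where γ₀ = (θ₀, σ*²) satisfies ∫₀¹ (∂f_{θ₀}/∂θ)(t)ᵀ (f₀(t) − f_{θ₀}(t)) g(t) dt = 0 and σ*² = σ₀² + ∫₀¹ |f₀(t) − f_{θ₀}(t)|² g(t) dt. -/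

import Mathlib

open Set Asymptotics

open Filter Topology

local notation "Evs" p => EuclideanSpace ℝ (Fin p)

section Infra
variable {p : ℕ} {f : EuclideanSpace ℝ (Fin p) → ℝ → ℝ}

/-- inclusion θ ↦ (θ, t) has constant derivative J -/
noncomputable def Jmap (p : ℕ) : (Evs p) →L[ℝ] (Evs p) × ℝ :=
  (ContinuousLinearMap.id ℝ (Evs p)).prod 0

lemma hJ (t : ℝ) (θ : Evs p) : HasFDerivAt (fun θ' : Evs p => (θ', t)) (Jmap p) θ :=
  HasFDerivAt.prodMk (hasFDerivAt_id θ) (hasFDerivAt_const t θ)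

lemma slice_contDiff (hf : ContDiff ℝ 2 (fun q : (Evs p) × ℝ => f q.1 q.2)) (t : ℝ) :
    ContDiff ℝ 2 (fun θ => f θ t) :=
  hf.comp (contDiff_id.prodMk contDiff_const)

lemma hD1 (hf : ContDiff ℝ 2 (fun q : (Evs p) × ℝ => f q.1 q.2)) (θ : Evs p) (t : ℝ) :
    HasFDerivAt (fun θ' => f θ' t) (fderiv ℝ (fun θ' => f θ' t) θ) θ :=
  (((slice_contDiff hf t).differentiable two_ne_zero) θ).hasFDerivAt

lemma hD1eq (hf : ContDiff ℝ 2 (fun q : (Evs p) × ℝ => f q.1 q.2)) (θ : Evs p) (t : ℝ) :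
    fderiv ℝ (fun θ' => f θ' t) θ
      = (fderiv ℝ (fun q : (Evs p) × ℝ => f q.1 q.2) (θ, t)).comp (Jmap p) :=
  by have h := ((((hf.differentiable two_ne_zero) (θ, t)).hasFDerivAt.comp θ (hJ t θ)).fderiv); exact h

lemma hD1cont (hf : ContDiff ℝ 2 (fun q : (Evs p) × ℝ => f q.1 q.2)) :
    Continuous (fun q : (Evs p) × ℝ => fderiv ℝ (fun θ' => f θ' q.2) q.1) := by
  have h1 : Continuous (fderiv ℝ (fun q : (Evs p) × ℝ => f q.1 q.2)) :=
    hf.continuous_fderiv two_ne_zero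
  have h2 : Continuous (fun q : (Evs p) × ℝ =>
      (fderiv ℝ (fun q : (Evs p) × ℝ => f q.1 q.2) q).comp (Jmap p)) :=
    h1.clm_comp continuous_const
  have : (fun q : (Evs p) × ℝ => fderiv ℝ (fun θ' => f θ' q.2) q.1)
      = fun q : (Evs p) × ℝ =>
        (fderiv ℝ (fun q : (Evs p) × ℝ => f q.1 q.2) (q.1, q.2)).comp (Jmap p) := by
    funext q; exact hD1eq hf q.1 q.2
  rw [this]; exact h2

lemma hD2 (hf : ContDiff ℝ 2 (fun q : (Evs p) × ℝ => f q.1 q.2)) (θ : Evs p) (t : ℝ) :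
    HasFDerivAt (fun θ' => fderiv ℝ (fun θ'' => f θ'' t) θ')
      (fderiv ℝ (fun θ' => fderiv ℝ (fun θ'' => f θ'' t) θ') θ) θ := by
  have h1 : ContDiff ℝ 1 (fderiv ℝ (fun θ'' => f θ'' t)) :=
    (slice_contDiff hf t).fderiv_right le_rfl
  exact ((h1.differentiable one_ne_zero) θ).hasFDerivAt

noncomputable def Phi (p : ℕ) : (((Evs p) × ℝ) →L[ℝ] ℝ) →L[ℝ] ((Evs p) →L[ℝ] ℝ) :=
  (ContinuousLinearMap.compL ℝ (Evs p) ((Evs p) × ℝ) ℝ).flip (Jmap p)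

lemma Phi_apply (L : ((Evs p) × ℝ) →L[ℝ] ℝ) : Phi p L = L.comp (Jmap p) := rfl

lemma hGcd (hf : ContDiff ℝ 2 (fun q : (Evs p) × ℝ => f q.1 q.2)) :
    ContDiff ℝ 1 (fderiv ℝ (fun q : (Evs p) × ℝ => f q.1 q.2)) :=
  hf.fderiv_right le_rfl

lemma hD2eq (hf : ContDiff ℝ 2 (fun q : (Evs p) × ℝ => f q.1 q.2)) (θ : Evs p) (t : ℝ) :
    fderiv ℝ (fun θ' => fderiv ℝ (fun θ'' => f θ'' t) θ') θ
      = (Phi p).comp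
          ((fderiv ℝ (fderiv ℝ (fun q : (Evs p) × ℝ => f q.1 q.2)) (θ, t)).comp (Jmap p)) := by
  have h1 : (fun θ' : Evs p => fderiv ℝ (fun θ'' => f θ'' t) θ')
      = fun θ' : Evs p => (Phi p) (fderiv ℝ (fun q : (Evs p) × ℝ => f q.1 q.2) (θ', t)) := by
    funext θ'; rw [hD1eq hf θ' t, Phi_apply]
  rw [h1]
  have h2 : HasFDerivAt (fun q : (Evs p) × ℝ => fderiv ℝ (fun q : (Evs p) × ℝ => f q.1 q.2) q)
      (fderiv ℝ (fderiv ℝ (fun q : (Evs p) × ℝ => f q.1 q.2)) (θ, t)) (θ, t) :=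
    (((hGcd hf).differentiable one_ne_zero) (θ, t)).hasFDerivAt
  have h3 := ((Phi p).hasFDerivAt.comp (θ, t) h2).comp θ (hJ t θ)
  rw [ContinuousLinearMap.comp_assoc] at h3
  exact h3.fderiv

lemma hD2cont (hf : ContDiff ℝ 2 (fun q : (Evs p) × ℝ => f q.1 q.2)) :
    Continuous (fun q : (Evs p) × ℝ =>
      fderiv ℝ (fun θ' => fderiv ℝ (fun θ'' => f θ'' q.2) θ') q.1) := by
  have h1 : Continuous (fderiv ℝ (fderiv ℝ (fun q : (Evs p) × ℝ => f q.1 q.2))) :=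
    (hGcd hf).continuous_fderiv one_ne_zero
  have h2 : Continuous (fun q : (Evs p) × ℝ => (Phi p).comp
      ((fderiv ℝ (fderiv ℝ (fun q : (Evs p) × ℝ => f q.1 q.2)) q).comp (Jmap p))) :=
    continuous_const.clm_comp (h1.clm_comp continuous_const)
  have : (fun q : (Evs p) × ℝ => fderiv ℝ (fun θ' => fderiv ℝ (fun θ'' => f θ'' q.2) θ') q.1)
      = fun q : (Evs p) × ℝ => (Phi p).comp
          ((fderiv ℝ (fderiv ℝ (fun q : (Evs p) × ℝ => f q.1 q.2)) (q.1, q.2)).comp (Jmap p)) := by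
    funext q; exact hD2eq hf q.1 q.2
  rw [this]; exact h2

end Infra
section Phider
variable {p : ℕ} {f : EuclideanSpace ℝ (Fin p) → ℝ → ℝ} {f₀ : ℝ → ℝ}

noncomputable def Pm (f : EuclideanSpace ℝ (Fin p) → ℝ → ℝ) (f₀ : ℝ → ℝ)
    (θ : EuclideanSpace ℝ (Fin p)) (t : ℝ) : EuclideanSpace ℝ (Fin p) →L[ℝ] ℝ :=
  (2 * f θ t - 2 * f₀ t) • fderiv ℝ (fun θ' => f θ' t) θ

noncomputable def Qm (f : EuclideanSpace ℝ (Fin p) → ℝ → ℝ) (f₀ : ℝ → ℝ)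
    (θ : EuclideanSpace ℝ (Fin p)) (t : ℝ) :
    EuclideanSpace ℝ (Fin p) →L[ℝ] (EuclideanSpace ℝ (Fin p) →L[ℝ] ℝ) :=
  (2 * f θ t - 2 * f₀ t) • fderiv ℝ (fun θ' => fderiv ℝ (fun θ'' => f θ'' t) θ') θ
    + ((2:ℝ) • fderiv ℝ (fun θ' => f θ' t) θ).smulRight (fderiv ℝ (fun θ' => f θ' t) θ)

lemma hP (hf : ContDiff ℝ 2 (fun q : EuclideanSpace ℝ (Fin p) × ℝ => f q.1 q.2))
    (θ : EuclideanSpace ℝ (Fin p)) (t : ℝ) :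
    HasFDerivAt (fun θ' => (f₀ t - f θ' t) ^ 2) (Pm f f₀ θ t) θ := by
  have hu : HasFDerivAt (fun θ' => f₀ t - f θ' t) (-fderiv ℝ (fun θ' => f θ' t) θ) θ := by
    have := (hasFDerivAt_const (f₀ t) θ).sub (hD1 hf θ t)
    exact this.congr_fderiv (zero_sub _)
  have h2 := hu.mul hu
  have e1 : (fun θ' => (f₀ t - f θ' t) ^ 2) = fun θ' => (f₀ t - f θ' t) * (f₀ t - f θ' t) := by
    funext θ'; rw [pow_two]
  have e2 : (f₀ t - f θ t) • -fderiv ℝ (fun θ' => f θ' t) θ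
      + (f₀ t - f θ t) • -fderiv ℝ (fun θ' => f θ' t) θ = Pm f f₀ θ t := by
    ext w
    simp [Pm, ContinuousLinearMap.smul_apply, smul_eq_mul]
    ring
  rw [e1, ← e2]
  exact h2

lemma hQ (hf : ContDiff ℝ 2 (fun q : EuclideanSpace ℝ (Fin p) × ℝ => f q.1 q.2))
    (θ : EuclideanSpace ℝ (Fin p)) (t : ℝ) :
    HasFDerivAt (fun θ' => Pm f f₀ θ' t) (Qm f f₀ θ t) θ := by
  have hc : HasFDerivAt (fun θ' => 2 * f θ' t - 2 * f₀ t)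
      ((2:ℝ) • fderiv ℝ (fun θ' => f θ' t) θ) θ :=
    ((hD1 hf θ t).const_mul 2).sub_const (2 * f₀ t)
  exact hc.smul (hD2 hf θ t)

lemma Qm_apply (θ : EuclideanSpace ℝ (Fin p)) (t : ℝ) (v w : EuclideanSpace ℝ (Fin p)) :
    Qm f f₀ θ t v w = (2 * f θ t - 2 * f₀ t) *
        (fderiv ℝ (fun θ' => fderiv ℝ (fun θ'' => f θ'' t) θ') θ v w)
      + 2 * (fderiv ℝ (fun θ' => f θ' t) θ v) * (fderiv ℝ (fun θ' => f θ' t) θ w) := by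
  simp only [Qm, ContinuousLinearMap.add_apply, ContinuousLinearMap.smul_apply,
    ContinuousLinearMap.smulRight_apply, smul_eq_mul]
  try ring

lemma hQsymm (hf : ContDiff ℝ 2 (fun q : EuclideanSpace ℝ (Fin p) × ℝ => f q.1 q.2))
    (θ₀ : EuclideanSpace ℝ (Fin p)) (t : ℝ) (v w : EuclideanSpace ℝ (Fin p)) :
    Qm f f₀ θ₀ t v w = Qm f f₀ θ₀ t w v :=
  second_derivative_symmetric (fun y => hP hf y t) (hQ hf θ₀ t) v w

lemma Qm_contOn (hf : ContDiff ℝ 2 (fun q : EuclideanSpace ℝ (Fin p) × ℝ => f q.1 q.2))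
    (hf₀ : ContinuousOn f₀ (Icc 0 1)) :
    ContinuousOn (fun q : EuclideanSpace ℝ (Fin p) × ℝ => Qm f f₀ q.1 q.2)
      (univ ×ˢ Icc (0:ℝ) 1) := by
  have hc : ContinuousOn (fun q : EuclideanSpace ℝ (Fin p) × ℝ => 2 * f q.1 q.2 - 2 * f₀ q.2)
      (univ ×ˢ Icc (0:ℝ) 1) := by
    apply ContinuousOn.sub
    · exact (continuous_const.mul hf.continuous).continuousOn
    · exact (hf₀.comp continuous_snd.continuousOn (fun q hq => hq.2)).const_smul 2 |>.congr
        (fun q hq => by simp [smul_eq_mul])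
  have hD2c := (hD2cont hf).continuousOn (s := univ ×ˢ Icc (0:ℝ) 1)
  have hD1c := (hD1cont hf).continuousOn (s := univ ×ˢ Icc (0:ℝ) 1)
  haveI : ContinuousAdd (EuclideanSpace ℝ (Fin p) →L[ℝ] EuclideanSpace ℝ (Fin p) →L[ℝ] ℝ) :=
    ContinuousLinearMap.topologicalAddGroup.toContinuousAdd
  apply ContinuousOn.fun_add
  · exact hc.smul hD2c
  · have h1 : Continuous (fun q : EuclideanSpace ℝ (Fin p) × ℝ =>
        ((2:ℝ) • fderiv ℝ (fun θ' => f θ' q.2) q.1).smulRight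
          (fderiv ℝ (fun θ' => f θ' q.2) q.1)) := by
      have h2 : Continuous (fun q : EuclideanSpace ℝ (Fin p) × ℝ =>
          (ContinuousLinearMap.smulRightL ℝ (EuclideanSpace ℝ (Fin p))
            (EuclideanSpace ℝ (Fin p) →L[ℝ] ℝ))
            ((2:ℝ) • fderiv ℝ (fun θ' => f θ' q.2) q.1)) :=
        (ContinuousLinearMap.continuous _).comp ((hD1cont hf).fun_const_smul 2)
      exact h2.clm_apply (hD1cont hf)
    exact h1.continuousOn
end Phider


lemma seg_norm_le {E : Type*} [NormedAddCommGroup E] [NormedSpace ℝ E]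
    {x₀ x y : E} (hy : y ∈ segment ℝ x₀ x) : ‖y - x₀‖ ≤ ‖x - x₀‖ := by
  obtain ⟨a, b, ha, hb, hab, rfl⟩ := hy
  have : a • x₀ + b • x - x₀ = b • (x - x₀) := by
    rw [smul_sub]; rw [show a = 1 - b by linarith]; module
  rw [this, norm_smul, Real.norm_eq_abs, abs_of_nonneg hb]
  nlinarith [norm_nonneg (x - x₀)]

lemma seg_subset {E : Type*} [NormedAddCommGroup E] [NormedSpace ℝ E]
    {x₀ x y : E} (hy : y ∈ segment ℝ x₀ x) : segment ℝ x₀ y ⊆ segment ℝ x₀ x :=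
  (convex_segment x₀ x).segment_subset (left_mem_segment ℝ x₀ x) hy

lemma quad_taylor_bound {E : Type*} [NormedAddCommGroup E] [NormedSpace ℝ E]
    (φ : E → ℝ) (φ' : E → E →L[ℝ] ℝ) (φ'' : E → (E →L[ℝ] (E →L[ℝ] ℝ)))
    (x₀ x : E) (ε : ℝ)
    (hd1 : ∀ y ∈ segment ℝ x₀ x, HasFDerivAt φ (φ' y) y)
    (hd2 : ∀ y ∈ segment ℝ x₀ x, HasFDerivAt φ' (φ'' y) y)
    (hsymm : ∀ u w, φ'' x₀ u w = φ'' x₀ w u)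
    (hb : ∀ y ∈ segment ℝ x₀ x, ‖φ'' y - φ'' x₀‖ ≤ ε) :
    |φ x - φ x₀ - φ' x₀ (x - x₀) - φ'' x₀ (x - x₀) (x - x₀) / 2| ≤ ε * ‖x - x₀‖ ^ 2 := by
  set A := φ'' x₀ with hA
  -- inner mean value: ‖φ' y - φ' x₀ - A (y - x₀)‖ ≤ ε * ‖y - x₀‖ on the segment
  have hAflip : A.flip = A := by
    ext u w; exact hsymm w u
  have inner : ∀ y ∈ segment ℝ x₀ x, ‖φ' y - φ' x₀ - A (y - x₀)‖ ≤ ε * ‖x - x₀‖ := by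
    intro y hy
    have key : ∀ z ∈ segment ℝ x₀ y,
        HasFDerivWithinAt (fun w => φ' w - φ' x₀ - A (w - x₀)) (φ'' z - A) (segment ℝ x₀ y) z := by
      intro z hz
      have h1 : HasFDerivAt (fun w : E => A (w - x₀)) A z := by
        have h0 := A.hasFDerivAt.comp z ((hasFDerivAt_id z).sub_const x₀)
        rw [ContinuousLinearMap.comp_id] at h0
        exact h0
      exact (((hd2 z (seg_subset hy hz)).sub_const (φ' x₀)).sub h1).hasFDerivWithinAt
    have bound : ∀ z ∈ segment ℝ x₀ y, ‖φ'' z - A‖ ≤ ε := fun z hz => hb z (seg_subset hy hz)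
    have := (convex_segment x₀ y).norm_image_sub_le_of_norm_hasFDerivWithin_le key bound
      (left_mem_segment ℝ x₀ y) (right_mem_segment ℝ x₀ y)
    simp only [sub_self, map_zero, sub_zero] at this
    calc ‖φ' y - φ' x₀ - A (y - x₀)‖ ≤ ε * ‖y - x₀‖ := this
      _ ≤ ε * ‖x - x₀‖ := by
          have hε : 0 ≤ ε := by
            have h := hb x₀ (left_mem_segment ℝ x₀ x)
            rw [← hA] at h; exact le_trans (ContinuousLinearMap.opNorm_nonneg _) h
          exact mul_le_mul_of_nonneg_left (seg_norm_le hy) hε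
  -- outer mean value
  have outer : ∀ y ∈ segment ℝ x₀ x,
      HasFDerivWithinAt (fun w => φ w - φ' x₀ (w - x₀) - A (w - x₀) (w - x₀) / 2)
        (φ' y - φ' x₀ - A (y - x₀)) (segment ℝ x₀ x) y := by
    intro y hy
    have h1 : HasFDerivAt (fun w : E => φ' x₀ (w - x₀)) (φ' x₀) y := by
      have h0 := (φ' x₀).hasFDerivAt.comp y ((hasFDerivAt_id y).sub_const x₀)
      rw [ContinuousLinearMap.comp_id] at h0
      exact h0
    have h2 : HasFDerivAt (fun w : E => A (w - x₀) (w - x₀)) ((2 : ℝ) • A (y - x₀)) y := by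
      have hc : HasFDerivAt (fun w : E => A (w - x₀)) A y := by
        have h0 := A.hasFDerivAt.comp y ((hasFDerivAt_id y).sub_const x₀)
        rw [ContinuousLinearMap.comp_id] at h0
        exact h0
      have hu : HasFDerivAt (fun w : E => w - x₀) (ContinuousLinearMap.id ℝ E) y :=
        (hasFDerivAt_id y).sub_const x₀
      have := hc.clm_apply hu
      refine this.congr_fderiv ?_
      rw [ContinuousLinearMap.comp_id, hAflip]
      ext w
      simp [two_smul]
    have h3 : HasFDerivAt (fun w : E => A (w - x₀) (w - x₀) / 2) (A (y - x₀)) y := by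
      have h4 := h2.const_smul (2⁻¹ : ℝ)
      have e1 : (2⁻¹:ℝ) • ((2:ℝ) • A (y - x₀)) = A (y - x₀) := by
        rw [smul_smul]; norm_num
      have e2 : ((2⁻¹:ℝ) • fun w : E => (A (w - x₀) (w - x₀))) =
          (fun w : E => A (w - x₀) (w - x₀) / 2) := by
        funext w; simp [smul_eq_mul]; ring
      rw [e1, e2] at h4
      exact h4
    exact (((hd1 y hy).sub h1).sub h3).hasFDerivWithinAt
  have MVT := (convex_segment x₀ x).norm_image_sub_le_of_norm_hasFDerivWithin_le outer
    (fun y hy => inner y hy) (left_mem_segment ℝ x₀ x) (right_mem_segment ℝ x₀ x)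
  simp only [sub_self, map_zero, sub_zero, zero_div] at MVT
  calc |φ x - φ x₀ - φ' x₀ (x - x₀) - A (x - x₀) (x - x₀) / 2|
      = ‖(φ x - φ' x₀ (x - x₀) - A (x - x₀) (x - x₀) / 2) - φ x₀‖ := by
        rw [Real.norm_eq_abs]; ring_nf
    _ ≤ (ε * ‖x - x₀‖) * ‖x - x₀‖ := MVT
    _ = ε * ‖x - x₀‖ ^ 2 := by ring


lemma seg_norm_le' {x₀ x y : ℝ} (hy : y ∈ segment ℝ x₀ x) : |y - x₀| ≤ |x - x₀| := by
  obtain ⟨a, b, ha, hb, hab, rfl⟩ := hy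
  have hx : a = 1 - b := by linarith
  have h1 : a • x₀ + b • x - x₀ = b * (x - x₀) := by
    simp only [smul_eq_mul, hx]; ring
  rw [h1, abs_mul, abs_of_nonneg hb]
  nlinarith [abs_nonneg (x - x₀)]

lemma quad_taylor_bound_1d (φ φ' φ'' : ℝ → ℝ) (x₀ x ε : ℝ)
    (hd1 : ∀ y ∈ segment ℝ x₀ x, HasDerivAt φ (φ' y) y)
    (hd2 : ∀ y ∈ segment ℝ x₀ x, HasDerivAt φ' (φ'' y) y)
    (hb : ∀ y ∈ segment ℝ x₀ x, |φ'' y - φ'' x₀| ≤ ε) :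
    |φ x - φ x₀ - φ' x₀ * (x - x₀) - φ'' x₀ * (x - x₀) ^ 2 / 2| ≤ ε * |x - x₀| ^ 2 := by
  have hseg : ∀ y ∈ segment ℝ x₀ x, segment ℝ x₀ y ⊆ segment ℝ x₀ x := fun y hy =>
    (convex_segment x₀ x).segment_subset (left_mem_segment ℝ x₀ x) hy
  have inner : ∀ y ∈ segment ℝ x₀ x,
      |φ' y - φ' x₀ - φ'' x₀ * (y - x₀)| ≤ ε * |x - x₀| := by
    intro y hy
    have key : ∀ z ∈ segment ℝ x₀ y,
        HasDerivWithinAt (fun w => φ' w - φ' x₀ - φ'' x₀ * (w - x₀)) (φ'' z - φ'' x₀)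
          (segment ℝ x₀ y) z := by
      intro z hz
      have h1 : HasDerivAt (fun w : ℝ => φ'' x₀ * (w - x₀)) (φ'' x₀) z := by
        have := ((hasDerivAt_id z).sub_const x₀).const_mul (φ'' x₀)
        simpa using this
      exact (((hd2 z (hseg y hy hz)).sub_const (φ' x₀)).sub h1).hasDerivWithinAt
    have bound : ∀ z ∈ segment ℝ x₀ y, ‖φ'' z - φ'' x₀‖ ≤ ε := fun z hz => hb z (hseg y hy hz)
    have := (convex_segment x₀ y).norm_image_sub_le_of_norm_hasDerivWithin_le key bound
      (left_mem_segment ℝ x₀ y) (right_mem_segment ℝ x₀ y)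
    simp only [sub_self, mul_zero, sub_zero] at this
    have hε : 0 ≤ ε := by
      have h := hb x₀ (left_mem_segment ℝ x₀ x)
      rw [sub_self] at h; exact le_trans (abs_nonneg 0) h
    calc |φ' y - φ' x₀ - φ'' x₀ * (y - x₀)| ≤ ε * ‖y - x₀‖ := this
      _ ≤ ε * |x - x₀| := mul_le_mul_of_nonneg_left (seg_norm_le' hy) hε
  have outer : ∀ y ∈ segment ℝ x₀ x,
      HasDerivWithinAt (fun w => φ w - φ' x₀ * (w - x₀) - φ'' x₀ * (w - x₀) ^ 2 / 2)
        (φ' y - φ' x₀ - φ'' x₀ * (y - x₀)) (segment ℝ x₀ x) y := by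
    intro y hy
    have h1 : HasDerivAt (fun w : ℝ => φ' x₀ * (w - x₀)) (φ' x₀) y := by
      have := ((hasDerivAt_id y).sub_const x₀).const_mul (φ' x₀)
      simpa using this
    have h2 : HasDerivAt (fun w : ℝ => φ'' x₀ * (w - x₀) ^ 2 / 2) (φ'' x₀ * (y - x₀)) y := by
      have h3 := (((hasDerivAt_id y).sub_const x₀).pow 2).const_mul (φ'' x₀)
      have h4 := h3.div_const 2
      refine h4.congr_deriv ?_
      simp only [id]
      ring
    exact (((hd1 y hy).sub h1).sub h2).hasDerivWithinAt
  have MVT := (convex_segment x₀ x).norm_image_sub_le_of_norm_hasDerivWithin_le outer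
    (fun y hy => inner y hy) (left_mem_segment ℝ x₀ x) (right_mem_segment ℝ x₀ x)
  simp only [sub_self, mul_zero, sub_zero] at MVT
  calc |φ x - φ x₀ - φ' x₀ * (x - x₀) - φ'' x₀ * (x - x₀) ^ 2 / 2|
      = ‖(φ x - φ' x₀ * (x - x₀) - φ'' x₀ * (x - x₀) ^ 2 / 2) -
          (φ x₀ - φ'' x₀ * (0:ℝ) ^ 2 / 2)‖ := by
        rw [Real.norm_eq_abs]; ring_nf
    _ ≤ (ε * |x - x₀|) * ‖x - x₀‖ := MVT
    _ = ε * |x - x₀| ^ 2 := by rw [Real.norm_eq_abs]; ring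
section ThetaPart
variable {p : ℕ} {f : EuclideanSpace ℝ (Fin p) → ℝ → ℝ} {f₀ g : ℝ → ℝ}
  {θ₀ : EuclideanSpace ℝ (Fin p)}

lemma stmt_D2_eq (hf : ContDiff ℝ 2 (fun q : EuclideanSpace ℝ (Fin p) × ℝ => f q.1 q.2))
    (θ₀ : EuclideanSpace ℝ (Fin p)) (t : ℝ) (w : EuclideanSpace ℝ (Fin p)) :
    fderiv ℝ (fun θ1 => fderiv ℝ (fun θ' => f θ' t) θ1 w) θ₀ w
      = fderiv ℝ (fun θ' => fderiv ℝ (fun θ'' => f θ'' t) θ') θ₀ w w := by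
  have h1 := (hD2 hf θ₀ t).clm_apply (hasFDerivAt_const w θ₀)
  rw [h1.fderiv]
  simp

lemma contD1 (hf : ContDiff ℝ 2 (fun q : EuclideanSpace ℝ (Fin p) × ℝ => f q.1 q.2))
    (θ₀ : EuclideanSpace ℝ (Fin p)) :
    Continuous (fun t => fderiv ℝ (fun θ' => f θ' t) θ₀) :=
  (hD1cont hf).comp (continuous_const.prodMk continuous_id)

lemma contD2 (hf : ContDiff ℝ 2 (fun q : EuclideanSpace ℝ (Fin p) × ℝ => f q.1 q.2))
    (θ₀ : EuclideanSpace ℝ (Fin p)) :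
    Continuous (fun t => fderiv ℝ (fun θ' => fderiv ℝ (fun θ'' => f θ'' t) θ') θ₀) :=
  (hD2cont hf).comp (continuous_const.prodMk continuous_id)

lemma contft (hf : ContDiff ℝ 2 (fun q : EuclideanSpace ℝ (Fin p) × ℝ => f q.1 q.2))
    (θ : EuclideanSpace ℝ (Fin p)) : Continuous (fun t => f θ t) :=
  hf.continuous.comp (continuous_const.prodMk continuous_id)

lemma theta_part
    (hf : ContDiff ℝ 2 (fun q : EuclideanSpace ℝ (Fin p) × ℝ => f q.1 q.2))
    (hf₀ : ContinuousOn f₀ (Icc 0 1)) (hgc : ContinuousOn g (Icc 0 1))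
    (hstat : ∀ v : EuclideanSpace ℝ (Fin p),
      (∫ t in (0:ℝ)..1, (fderiv ℝ (fun θ => f θ t) θ₀ v) * (f₀ t - f θ₀ t) * g t) = 0) :
    (fun θ : EuclideanSpace ℝ (Fin p) =>
        (∫ t in (0:ℝ)..1, (f₀ t - f θ t)^2 * g t)
          - (∫ t in (0:ℝ)..1, (f₀ t - f θ₀ t)^2 * g t)
          - ∫ t in (0:ℝ)..1, ((fderiv ℝ (fun θ' => f θ' t) θ₀ (θ - θ₀))^2
              - (fderiv ℝ (fun θ1 => fderiv ℝ (fun θ' => f θ' t) θ1 (θ - θ₀)) θ₀ (θ - θ₀))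
                * (f₀ t - f θ₀ t)) * g t)
      =o[𝓝 θ₀] (fun θ => ‖θ - θ₀‖^2) := by
  have hIcc : uIcc (0:ℝ) 1 = Icc 0 1 := uIcc_of_le zero_le_one
  obtain ⟨Mg, hMg⟩ := isCompact_Icc.exists_bound_of_continuousOn hgc
  have hMg0 : 0 ≤ Mg := le_trans (norm_nonneg _) (hMg 0 (by norm_num))
  have hK : IsCompact ((Metric.closedBall θ₀ 1) ×ˢ Icc (0:ℝ) 1) :=
    (isCompact_closedBall θ₀ 1).prod isCompact_Icc
  have hQc : ContinuousOn (fun q : EuclideanSpace ℝ (Fin p) × ℝ => Qm f f₀ q.1 q.2)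
      ((Metric.closedBall θ₀ 1) ×ˢ Icc (0:ℝ) 1) :=
    (Qm_contOn hf hf₀).mono (prod_mono (subset_univ _) subset_rfl)
  have hUC : UniformContinuousOn (fun q : EuclideanSpace ℝ (Fin p) × ℝ => Qm f f₀ q.1 q.2)
      ((Metric.closedBall θ₀ 1) ×ˢ Icc (0:ℝ) 1) :=
    hK.uniformContinuousOn_of_continuous hQc
  have hUC2 : @UniformContinuousOn ((EuclideanSpace ℝ (Fin p)) × ℝ)
      ((EuclideanSpace ℝ (Fin p)) →L[ℝ] (EuclideanSpace ℝ (Fin p)) →L[ℝ] ℝ)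
      PseudoMetricSpace.toUniformSpace PseudoMetricSpace.toUniformSpace
      (fun q => Qm f f₀ q.1 q.2) ((Metric.closedBall θ₀ 1) ×ˢ Icc (0:ℝ) 1) := hUC
  have hUC' := Metric.uniformContinuousOn_iff.mp hUC2
  rw [isLittleO_iff]
  intro c hc
  set ε := c / (Mg + 1) with hε
  have hεpos : 0 < ε := div_pos hc (by linarith)
  obtain ⟨δ₀, hδ₀, hδ⟩ := hUC' ε hεpos
  rw [Metric.eventually_nhds_iff]
  refine ⟨min δ₀ 1, by positivity, ?_⟩
  intro θ hθd
  rw [dist_eq_norm] at hθd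
  set v := θ - θ₀ with hv
  -- pointwise Taylor bound
  have hpt : ∀ t ∈ Icc (0:ℝ) 1,
      |(f₀ t - f θ t)^2 - (f₀ t - f θ₀ t)^2 - Pm f f₀ θ₀ t v - Qm f f₀ θ₀ t v v / 2|
        ≤ ε * ‖v‖^2 := by
    intro t ht
    apply quad_taylor_bound (fun θ' => (f₀ t - f θ' t)^2) (fun θ' => Pm f f₀ θ' t)
      (fun θ' => Qm f f₀ θ' t) θ₀ θ ε
    · intro y _; exact hP hf y t
    · intro y _; exact hQ hf y t
    · exact hQsymm hf θ₀ t
    · intro y hy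
      have hyb : ‖y - θ₀‖ ≤ ‖v‖ := seg_norm_le hy
      have hy1 : y ∈ Metric.closedBall θ₀ 1 := by
        rw [Metric.mem_closedBall, dist_eq_norm]
        exact le_trans hyb (le_of_lt (lt_of_lt_of_le hθd (min_le_right _ _)))
      have hθ₀1 : θ₀ ∈ Metric.closedBall θ₀ 1 := Metric.mem_closedBall_self zero_le_one
      have hdist : dist ((y, t) : EuclideanSpace ℝ (Fin p) × ℝ) (θ₀, t) < δ₀ := by
        rw [Prod.dist_eq]
        simp only [dist_self]
        rw [dist_eq_norm]
        exact lt_of_le_of_lt (by simp [le_max_left]) (lt_of_le_of_lt hyb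
          (lt_of_lt_of_le hθd (min_le_left _ _)))
      have := hδ (y, t) ⟨hy1, ht⟩ (θ₀, t) ⟨hθ₀1, ht⟩ hdist
      simp only [dist_eq_norm] at this
      have e : dist (Qm f f₀ y t) (Qm f f₀ θ₀ t) = ‖Qm f f₀ y t - Qm f f₀ θ₀ t‖ :=
        dist_eq_norm (Qm f f₀ y t) (Qm f f₀ θ₀ t)
      exact (e ▸ this).le
  -- continuity facts in t
  have hcf : Continuous (fun t => f θ t) := contft hf θ
  have hcf0 : Continuous (fun t => f θ₀ t) := contft hf θ₀
  have hcD1 : Continuous (fun t => fderiv ℝ (fun θ' => f θ' t) θ₀ v) :=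
    (contD1 hf θ₀).clm_apply continuous_const
  have hcD2 : Continuous (fun t =>
      fderiv ℝ (fun θ' => fderiv ℝ (fun θ'' => f θ'' t) θ') θ₀ v v) :=
    ((contD2 hf θ₀).clm_apply continuous_const).clm_apply continuous_const
  have hA1 : IntervalIntegrable (fun t => (f₀ t - f θ t)^2 * g t) MeasureTheory.volume 0 1 := by
    apply ContinuousOn.intervalIntegrable
    rw [hIcc]
    exact (((hf₀.sub hcf.continuousOn).pow 2).mul hgc)
  have hA2 : IntervalIntegrable (fun t => (f₀ t - f θ₀ t)^2 * g t) MeasureTheory.volume 0 1 := by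
    apply ContinuousOn.intervalIntegrable
    rw [hIcc]
    exact (((hf₀.sub hcf0.continuousOn).pow 2).mul hgc)
  have hA3 : IntervalIntegrable (fun t => Pm f f₀ θ₀ t v * g t) MeasureTheory.volume 0 1 := by
    apply ContinuousOn.intervalIntegrable
    rw [hIcc]
    have : ContinuousOn (fun t => Pm f f₀ θ₀ t v) (Icc 0 1) := by
      simp only [Pm, ContinuousLinearMap.smul_apply, smul_eq_mul]
      exact ((continuous_const.mul hcf0).continuousOn.sub
        ((hf₀.const_smul 2).congr (fun q hq => by simp [smul_eq_mul]))).mul hcD1.continuousOn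
    exact this.mul hgc
  have hA4 : IntervalIntegrable (fun t => (Qm f f₀ θ₀ t v v / 2) * g t)
      MeasureTheory.volume 0 1 := by
    apply ContinuousOn.intervalIntegrable
    rw [hIcc]
    have : ContinuousOn (fun t => Qm f f₀ θ₀ t v v / 2) (Icc 0 1) := by
      have heq : ∀ t, Qm f f₀ θ₀ t v v / 2
          = (f θ₀ t - f₀ t) * (fderiv ℝ (fun θ' => fderiv ℝ (fun θ'' => f θ'' t) θ') θ₀ v v)
            + (fderiv ℝ (fun θ' => f θ' t) θ₀ v)^2 := by
        intro t; rw [Qm_apply]; ring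
      have : ContinuousOn (fun t =>
          (f θ₀ t - f₀ t) * (fderiv ℝ (fun θ' => fderiv ℝ (fun θ'' => f θ'' t) θ') θ₀ v v)
            + (fderiv ℝ (fun θ' => f θ' t) θ₀ v)^2) (Icc 0 1) :=
        ((hcf0.continuousOn.sub hf₀).mul hcD2.continuousOn).add (hcD1.pow 2).continuousOn
      exact this.congr (fun t _ => heq t)
    exact this.mul hgc
  -- the third integral equals the Qm-version
  have hstmt_eq : (∫ t in (0:ℝ)..1, ((fderiv ℝ (fun θ' => f θ' t) θ₀ v)^2
      - (fderiv ℝ (fun θ1 => fderiv ℝ (fun θ' => f θ' t) θ1 v) θ₀ v)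
        * (f₀ t - f θ₀ t)) * g t)
      = ∫ t in (0:ℝ)..1, (Qm f f₀ θ₀ t v v / 2) * g t := by
    apply intervalIntegral.integral_congr
    intro t _
    dsimp only
    rw [stmt_D2_eq hf θ₀ t v, Qm_apply]
    ring
  -- the linear term vanishes
  have hA3zero : (∫ t in (0:ℝ)..1, Pm f f₀ θ₀ t v * g t) = 0 := by
    have heq : (fun t => Pm f f₀ θ₀ t v * g t)
        = fun t => (-2 : ℝ) * ((fderiv ℝ (fun θ' => f θ' t) θ₀ v) * (f₀ t - f θ₀ t) * g t) := by
      funext t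
      simp only [Pm, ContinuousLinearMap.smul_apply, smul_eq_mul]
      ring
    rw [heq, intervalIntegral.integral_const_mul, hstat v, mul_zero]
  -- main identity
  have hiden : (∫ t in (0:ℝ)..1, (f₀ t - f θ t)^2 * g t)
      - (∫ t in (0:ℝ)..1, (f₀ t - f θ₀ t)^2 * g t)
      - (∫ t in (0:ℝ)..1, ((fderiv ℝ (fun θ' => f θ' t) θ₀ v)^2
          - (fderiv ℝ (fun θ1 => fderiv ℝ (fun θ' => f θ' t) θ1 v) θ₀ v)
            * (f₀ t - f θ₀ t)) * g t)
      = ∫ t in (0:ℝ)..1,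
          ((f₀ t - f θ t)^2 - (f₀ t - f θ₀ t)^2 - Pm f f₀ θ₀ t v - Qm f f₀ θ₀ t v v / 2) * g t := by
    rw [hstmt_eq]
    rw [show (∫ t in (0:ℝ)..1, (f₀ t - f θ t)^2 * g t)
        - (∫ t in (0:ℝ)..1, (f₀ t - f θ₀ t)^2 * g t)
        - (∫ t in (0:ℝ)..1, (Qm f f₀ θ₀ t v v / 2) * g t)
      = (∫ t in (0:ℝ)..1, (f₀ t - f θ t)^2 * g t)
        - (∫ t in (0:ℝ)..1, (f₀ t - f θ₀ t)^2 * g t)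
        - (∫ t in (0:ℝ)..1, Pm f f₀ θ₀ t v * g t)
        - (∫ t in (0:ℝ)..1, (Qm f f₀ θ₀ t v v / 2) * g t) by rw [hA3zero]; ring]
    rw [← intervalIntegral.integral_sub hA1 hA2, ← intervalIntegral.integral_sub (hA1.sub hA2) hA3,
      ← intervalIntegral.integral_sub ((hA1.sub hA2).sub hA3) hA4]
    apply intervalIntegral.integral_congr
    intro t _
    dsimp only
    ring
  rw [hiden]
  -- final bound
  have hbound : ‖∫ t in (0:ℝ)..1,
      ((f₀ t - f θ t)^2 - (f₀ t - f θ₀ t)^2 - Pm f f₀ θ₀ t v - Qm f f₀ θ₀ t v v / 2) * g t‖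
      ≤ (ε * ‖v‖^2 * Mg) * |1 - 0| := by
    apply intervalIntegral.norm_integral_le_of_norm_le_const
    intro t ht
    have htIcc : t ∈ Icc (0:ℝ) 1 := by
      rw [uIoc_of_le zero_le_one] at ht
      exact Ioc_subset_Icc_self ht
    rw [Real.norm_eq_abs, abs_mul]
    have hgt : |g t| ≤ Mg := by rw [← Real.norm_eq_abs]; exact hMg t htIcc
    exact mul_le_mul (hpt t htIcc) hgt (abs_nonneg _) (by positivity)
  calc ‖∫ t in (0:ℝ)..1,
      ((f₀ t - f θ t)^2 - (f₀ t - f θ₀ t)^2 - Pm f f₀ θ₀ t v - Qm f f₀ θ₀ t v v / 2) * g t‖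
      ≤ (ε * ‖v‖^2 * Mg) * |1 - 0| := hbound
    _ ≤ c * ‖‖v‖^2‖ := by
        rw [show |(1:ℝ) - 0| = 1 by norm_num, mul_one, Real.norm_of_nonneg (by positivity)]
        have : ε * Mg ≤ c := by
          rw [hε, div_mul_eq_mul_div, div_le_iff₀ (by linarith)]
          nlinarith
        nlinarith [sq_nonneg ‖v‖, norm_nonneg v]
end ThetaPart
section QB
variable {p : ℕ} {f : EuclideanSpace ℝ (Fin p) → ℝ → ℝ} {f₀ g : ℝ → ℝ}
  {θ₀ : EuclideanSpace ℝ (Fin p)}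

lemma Q2_bound (hf : ContDiff ℝ 2 (fun q : EuclideanSpace ℝ (Fin p) × ℝ => f q.1 q.2))
    (hf₀ : ContinuousOn f₀ (Icc 0 1)) (hgc : ContinuousOn g (Icc 0 1))
    (θ₀ : EuclideanSpace ℝ (Fin p)) :
    ∃ M : ℝ, 0 ≤ M ∧ ∀ w : EuclideanSpace ℝ (Fin p),
      |∫ t in (0:ℝ)..1, ((fderiv ℝ (fun θ' => f θ' t) θ₀ w)^2
        - (fderiv ℝ (fun θ1 => fderiv ℝ (fun θ' => f θ' t) θ1 w) θ₀ w)
          * (f₀ t - f θ₀ t)) * g t| ≤ M * ‖w‖^2 := by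
  obtain ⟨Mg, hMg⟩ := isCompact_Icc.exists_bound_of_continuousOn hgc
  obtain ⟨C₁, hC₁⟩ := isCompact_Icc.exists_bound_of_continuousOn (contD1 hf θ₀).continuousOn
  obtain ⟨C₂, hC₂⟩ := isCompact_Icc.exists_bound_of_continuousOn
    (f := fun t => fderiv ℝ (fun θ' => fderiv ℝ (fun θ'' => f θ'' t) θ') θ₀) (contD2 hf θ₀).continuousOn
  obtain ⟨C₃, hC₃⟩ := isCompact_Icc.exists_bound_of_continuousOn
    (hf₀.sub (contft hf θ₀).continuousOn)
  have h0 : (0:ℝ) ∈ Icc (0:ℝ) 1 := by norm_num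
  have hMg0 : 0 ≤ Mg := le_trans (norm_nonneg _) (hMg 0 h0)
  have hC₁0 : 0 ≤ C₁ := le_trans (norm_nonneg _) (hC₁ 0 h0)
  have hC₂0 : 0 ≤ C₂ := le_trans (norm_nonneg _) (hC₂ 0 h0)
  have hC₃0 : 0 ≤ C₃ := le_trans (norm_nonneg _) (hC₃ 0 h0)
  refine ⟨(C₁^2 + C₂ * C₃) * Mg, by positivity, fun w => ?_⟩
  have hb := intervalIntegral.norm_integral_le_of_norm_le_const
    (C := ((C₁^2 + C₂ * C₃) * Mg) * ‖w‖^2)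
    (f := fun t => ((fderiv ℝ (fun θ' => f θ' t) θ₀ w)^2
        - (fderiv ℝ (fun θ1 => fderiv ℝ (fun θ' => f θ' t) θ1 w) θ₀ w)
          * (f₀ t - f θ₀ t)) * g t) (a := (0:ℝ)) (b := 1) ?_
  · rw [Real.norm_eq_abs] at hb
    calc |∫ t in (0:ℝ)..1, _| ≤ ((C₁^2 + C₂ * C₃) * Mg) * ‖w‖^2 * |1 - 0| := hb
      _ = (C₁^2 + C₂ * C₃) * Mg * ‖w‖^2 := by norm_num
  · intro t ht
    have htIcc : t ∈ Icc (0:ℝ) 1 := by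
      rw [uIoc_of_le zero_le_one] at ht
      exact Ioc_subset_Icc_self ht
    have h1 : |fderiv ℝ (fun θ' => f θ' t) θ₀ w| ≤ C₁ * ‖w‖ := by
      calc |fderiv ℝ (fun θ' => f θ' t) θ₀ w| ≤ ‖fderiv ℝ (fun θ' => f θ' t) θ₀‖ * ‖w‖ :=
            (fderiv ℝ (fun θ' => f θ' t) θ₀).le_opNorm w
        _ ≤ C₁ * ‖w‖ := mul_le_mul_of_nonneg_right (hC₁ t htIcc) (norm_nonneg w)
    have h2 : |fderiv ℝ (fun θ1 => fderiv ℝ (fun θ' => f θ' t) θ1 w) θ₀ w| ≤ C₂ * ‖w‖^2 := by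
      rw [stmt_D2_eq hf θ₀ t w]
      calc |fderiv ℝ (fun θ' => fderiv ℝ (fun θ'' => f θ'' t) θ') θ₀ w w|
          ≤ ‖fderiv ℝ (fun θ' => fderiv ℝ (fun θ'' => f θ'' t) θ') θ₀ w‖ * ‖w‖ :=
            (fderiv ℝ (fun θ' => fderiv ℝ (fun θ'' => f θ'' t) θ') θ₀ w).le_opNorm w
        _ ≤ (‖fderiv ℝ (fun θ' => fderiv ℝ (fun θ'' => f θ'' t) θ') θ₀‖ * ‖w‖) * ‖w‖ :=
            mul_le_mul_of_nonneg_right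
              ((fderiv ℝ (fun θ' => fderiv ℝ (fun θ'' => f θ'' t) θ') θ₀).le_opNorm w)
              (norm_nonneg w)
        _ ≤ (C₂ * ‖w‖) * ‖w‖ := by
            have := mul_le_mul_of_nonneg_right (hC₂ t htIcc) (norm_nonneg w)
            nlinarith [norm_nonneg w]
        _ = C₂ * ‖w‖^2 := by ring
    have h3 : |f₀ t - f θ₀ t| ≤ C₃ := by
      rw [← Real.norm_eq_abs]; exact hC₃ t htIcc
    have h4 : |g t| ≤ Mg := by rw [← Real.norm_eq_abs]; exact hMg t htIcc
    rw [Real.norm_eq_abs, abs_mul]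
    have h5 : |(fderiv ℝ (fun θ' => f θ' t) θ₀ w)^2
        - (fderiv ℝ (fun θ1 => fderiv ℝ (fun θ' => f θ' t) θ1 w) θ₀ w) * (f₀ t - f θ₀ t)|
        ≤ (C₁^2 + C₂ * C₃) * ‖w‖^2 := by
      have h6 := abs_sub (((fderiv ℝ (fun θ' => f θ' t) θ₀ w))^2)
        ((fderiv ℝ (fun θ1 => fderiv ℝ (fun θ' => f θ' t) θ1 w) θ₀ w) * (f₀ t - f θ₀ t))
      calc |(fderiv ℝ (fun θ' => f θ' t) θ₀ w)^2
            - (fderiv ℝ (fun θ1 => fderiv ℝ (fun θ' => f θ' t) θ1 w) θ₀ w) * (f₀ t - f θ₀ t)|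
          ≤ |(fderiv ℝ (fun θ' => f θ' t) θ₀ w)^2|
            + |(fderiv ℝ (fun θ1 => fderiv ℝ (fun θ' => f θ' t) θ1 w) θ₀ w) * (f₀ t - f θ₀ t)| :=
            abs_sub _ _
        _ ≤ (C₁ * ‖w‖)^2 + (C₂ * ‖w‖^2) * C₃ := by
            rw [abs_mul, abs_pow]
            have := abs_nonneg (fderiv ℝ (fun θ' => f θ' t) θ₀ w)
            have := abs_nonneg (fderiv ℝ (fun θ1 => fderiv ℝ (fun θ' => f θ' t) θ1 w) θ₀ w)
            have := abs_nonneg (f₀ t - f θ₀ t)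
            have hsq : |fderiv ℝ (fun θ' => f θ' t) θ₀ w|^2 ≤ (C₁ * ‖w‖)^2 := by nlinarith
            have hpr := mul_le_mul h2 h3 (abs_nonneg _) (by positivity)
            linarith
        _ = (C₁^2 + C₂ * C₃) * ‖w‖^2 := by ring
    calc |(fderiv ℝ (fun θ' => f θ' t) θ₀ w)^2
          - (fderiv ℝ (fun θ1 => fderiv ℝ (fun θ' => f θ' t) θ1 w) θ₀ w) * (f₀ t - f θ₀ t)| * |g t|
        ≤ ((C₁^2 + C₂ * C₃) * ‖w‖^2) * Mg :=
          mul_le_mul h5 h4 (abs_nonneg _) (by positivity)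
      _ = (C₁^2 + C₂ * C₃) * Mg * ‖w‖^2 := by ring
end QB
section SigmaPart

lemma log_sqrt_hasDerivAt {y : ℝ} (hy : 0 < y) :
    HasDerivAt (fun s => Real.log (Real.sqrt s)) (1 / y / 2) y := by
  have h1 : (fun s : ℝ => Real.log s / 2) =ᶠ[nhds y] (fun s => Real.log (Real.sqrt s)) := by
    filter_upwards [eventually_gt_nhds hy] with z hz
    rw [Real.log_sqrt hz.le]
  have h2 : HasDerivAt (fun s : ℝ => Real.log s / 2) (1 / y / 2) y := by
    have := (Real.hasDerivAt_log hy.ne').div_const 2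
    refine this.congr_deriv ?_
    rw [one_div]
  exact h2.congr_of_eventuallyEq h1.symm

lemma sigma_taylor (σ : ℝ) (hσ : 0 < σ) :
    (fun s => Real.log (Real.sqrt s) - Real.log (Real.sqrt σ) + σ / (2 * s) - 1/2
        - (s - σ)^2 / (4 * σ^2))
      =o[nhds σ] (fun s => (s - σ)^2) := by
  set φ : ℝ → ℝ := fun s => Real.log (Real.sqrt s) - Real.log (Real.sqrt σ) + σ / (2 * s) - 1/2
    with hφ
  set φ' : ℝ → ℝ := fun s => 1 / s / 2 - σ / (2 * s^2) with hφ'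
  set φ'' : ℝ → ℝ := fun s => -(1 / s^2) / 2 + σ / s^3 with hφ''
  have hd1 : ∀ y : ℝ, 0 < y → HasDerivAt φ (φ' y) y := by
    intro y hy
    have h1 := log_sqrt_hasDerivAt hy
    have h2 : HasDerivAt (fun s : ℝ => σ / (2 * s)) (-σ / (2 * y^2) * 2 / 2) y := by
      have h3 : HasDerivAt (fun s : ℝ => 2 * s) 2 y := by
        have := (hasDerivAt_id y).const_mul (2:ℝ)
        simpa using this
      have h4 := (hasDerivAt_const y σ).div h3 (by positivity)
      refine h4.congr_deriv ?_
      field_simp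
      ring
    have := ((h1.sub_const (Real.log (Real.sqrt σ))).add h2).sub_const (1/2)
    refine this.congr_deriv ?_
    simp only [hφ']
    field_simp
    ring
  have hd2 : ∀ y : ℝ, 0 < y → HasDerivAt φ' (φ'' y) y := by
    intro y hy
    have h1 : HasDerivAt (fun s : ℝ => 1 / s / 2) (-(1/y^2) / 2) y := by
      have h2 := ((hasDerivAt_const y (1:ℝ)).div (hasDerivAt_id y) hy.ne').div_const 2
      refine h2.congr_deriv ?_
      simp only [id]
      field_simp
      ring
    have h3 : HasDerivAt (fun s : ℝ => σ / (2 * s^2)) (-(σ / y^3)) y := by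
      have h4 : HasDerivAt (fun s : ℝ => 2 * s^2) (2 * (2 * y)) y := by
        have := ((hasDerivAt_id y).pow 2).const_mul (2:ℝ)
        refine this.congr_deriv ?_
        simp
        try ring
      have h5 := (hasDerivAt_const y σ).div h4 (by positivity)
      refine h5.congr_deriv ?_
      field_simp
      ring
    have := h1.sub h3
    refine this.congr_deriv ?_
    simp only [hφ'']
    field_simp
    ring
  have hφ''cont : ContinuousAt φ'' σ := by
    apply ContinuousAt.add
    · exact (((continuousAt_const).div (continuousAt_id.pow 2) (pow_ne_zero 2 hσ.ne')).neg).div_const 2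
    · exact (continuousAt_const).div (continuousAt_id.pow 3) (by positivity)
  rw [Asymptotics.isLittleO_iff]
  intro c hc
  have hcont := Metric.continuousAt_iff.mp hφ''cont c hc
  obtain ⟨δ₁, hδ₁, hball⟩ := hcont
  rw [Metric.eventually_nhds_iff]
  refine ⟨min δ₁ (σ/2), by positivity, ?_⟩
  intro s hs
  rw [Real.dist_eq] at hs
  have hseg : ∀ y ∈ segment ℝ σ s, |y - σ| ≤ |s - σ| := fun y hy => seg_norm_le' hy
  have hpos : ∀ y ∈ segment ℝ σ s, 0 < y := by
    intro y hy
    have := hseg y hy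
    have h0 : |s - σ| < σ/2 := lt_of_lt_of_le hs (min_le_right _ _)
    have := abs_lt.mp (lt_of_le_of_lt this h0)
    linarith
  have key := quad_taylor_bound_1d φ φ' φ'' σ s c
    (fun y hy => hd1 y (hpos y hy))
    (fun y hy => hd2 y (hpos y hy))
    (fun y hy => by
      have hd := hball (show dist y σ < δ₁ from
        lt_of_le_of_lt (by rw [Real.dist_eq]; exact hseg y hy)
          (lt_of_lt_of_le hs (min_le_left _ _)))
      rw [Real.dist_eq] at hd
      exact hd.le)
  have hφσ : φ σ = 0 := by
    simp only [hφ]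
    have h9 : σ / (2 * σ) = 1/2 := by
      rw [div_eq_iff (by positivity)]; ring
    rw [h9]; ring
  have hφ'σ : φ' σ = 0 := by
    simp only [hφ']
    field_simp
    try ring
  have hφ''σ : φ'' σ = 1 / (2 * σ^2) := by
    simp only [hφ'']
    field_simp
    ring
  rw [hφσ, hφ'σ, hφ''σ] at key
  simp only [sub_zero, zero_mul] at key
  have heq : φ s - 1 / (2 * σ^2) * (s - σ)^2 / 2 = φ s - (s - σ)^2 / (4 * σ^2) := by
    field_simp
    ring
  rw [heq] at key
  calc ‖φ s - (s - σ)^2 / (4 * σ^2)‖ = |φ s - (s - σ)^2 / (4 * σ^2)| := rfl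
    _ ≤ c * |s - σ|^2 := key
    _ = c * ‖(s - σ)^2‖ := by
        rw [Real.norm_of_nonneg (sq_nonneg _), sq_abs]
end SigmaPart

/-- Second-order Taylor expansion of the misspecified
Kullback–Leibler function `γ ↦ −P₀ log(p_γ/p_{γ₀})` around `γ₀ = (θ₀, σ*²)`:
`−P₀ log(p_γ/p_{γ₀}) = (1/2)(γ − γ₀)ᵀ V_{γ₀} (γ − γ₀) + o(‖γ − γ₀‖²)`,
where `V_{γ₀} = diag(σ*⁻² V_{θ₀}, σ*⁻⁴/2)` with
`V_{θ₀} = ∫₀¹ (ḟ_{θ₀}ᵀḟ_{θ₀} − ∂/∂θ[ḟ_θᵀ(f₀ − f_{θ₀})]|_{θ₀}) g dt`,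
and `γ₀` satisfies the stationarity conditions
`∫₀¹ ḟ_{θ₀}ᵀ(f₀ − f_{θ₀}) g = 0`, `σ*² = σ₀² + ∫₀¹ |f₀ − f_{θ₀}|² g`.
Here `−P₀ log(p_γ/p_{γ₀})` is expressed by its closed form
`log σ − log σ* + (2σ²)⁻¹(σ₀² + ∫(f₀−f_θ)²g) − (2σ*²)⁻¹(σ₀² + ∫(f₀−f_{θ₀})²g)`. -/
theorem statement4
    (p : ℕ) (f : EuclideanSpace ℝ (Fin p) → ℝ → ℝ) (f₀ g : ℝ → ℝ)
    (σ0sq : ℝ) (hσ0 : 0 < σ0sq)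
    (hf : ContDiff ℝ 2 (fun q : EuclideanSpace ℝ (Fin p) × ℝ => f q.1 q.2))
    (hf₀ : ContinuousOn f₀ (Icc 0 1)) (hgc : ContinuousOn g (Icc 0 1))
    (hg : ∀ t ∈ Icc (0:ℝ) 1, 0 ≤ g t)
    (θ₀ : EuclideanSpace ℝ (Fin p)) (σstarsq : ℝ) (hσstar : 0 < σstarsq)
    -- stationarity of `γ₀ = (θ₀, σ*²)`
    (hstat : ∀ v : EuclideanSpace ℝ (Fin p),
      (∫ t in (0:ℝ)..1, (fderiv ℝ (fun θ => f θ t) θ₀ v) * (f₀ t - f θ₀ t) * g t) = 0)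
    (hsigma : σstarsq = σ0sq + ∫ t in (0:ℝ)..1, (f₀ t - f θ₀ t)^2 * g t)
    -- the Kullback–Leibler function `γ = (θ, σ²) ↦ −P₀ log(p_γ/p_{γ₀})`
    (KL : EuclideanSpace ℝ (Fin p) × ℝ → ℝ)
    (hKL : ∀ θ, ∀ s > (0:ℝ), KL (θ, s) =
      Real.log (Real.sqrt s) - Real.log (Real.sqrt σstarsq)
        + (σ0sq + ∫ t in (0:ℝ)..1, (f₀ t - f θ t)^2 * g t) / (2 * s)
        - (σ0sq + ∫ t in (0:ℝ)..1, (f₀ t - f θ₀ t)^2 * g t) / (2 * σstarsq)) :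
    (fun γ : EuclideanSpace ℝ (Fin p) × ℝ =>
        KL γ -
          ((1 / (2 * σstarsq)) *
              (∫ t in (0:ℝ)..1,
                ((fderiv ℝ (fun θ => f θ t) θ₀ (γ.1 - θ₀))^2 -
                  (fderiv ℝ (fun θ => fderiv ℝ (fun θ' => f θ' t) θ (γ.1 - θ₀)) θ₀ (γ.1 - θ₀))
                    * (f₀ t - f θ₀ t)) * g t)
            + (γ.2 - σstarsq)^2 / (4 * σstarsq^2)))
      =o[nhds (θ₀, σstarsq)]
      (fun γ : EuclideanSpace ℝ (Fin p) × ℝ => ‖γ - (θ₀, σstarsq)‖^2) := by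
  classical
  set Fθ : EuclideanSpace ℝ (Fin p) → ℝ :=
    fun θ => ∫ t in (0:ℝ)..1, (f₀ t - f θ t)^2 * g t with hFθ
  set Q₂ : EuclideanSpace ℝ (Fin p) → ℝ :=
    fun w => ∫ t in (0:ℝ)..1, ((fderiv ℝ (fun θ => f θ t) θ₀ w)^2 -
      (fderiv ℝ (fun θ => fderiv ℝ (fun θ' => f θ' t) θ w) θ₀ w)
        * (f₀ t - f θ₀ t)) * g t with hQ₂
  show (fun γ : EuclideanSpace ℝ (Fin p) × ℝ =>
      KL γ - ((1 / (2 * σstarsq)) * Q₂ (γ.1 - θ₀) + (γ.2 - σstarsq)^2 / (4 * σstarsq^2)))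
    =o[nhds (θ₀, σstarsq)]
    (fun γ : EuclideanSpace ℝ (Fin p) × ℝ => ‖γ - (θ₀, σstarsq)‖^2)
  -- eventual positivity of the second coordinate
  have hev2 : ∀ᶠ γ : EuclideanSpace ℝ (Fin p) × ℝ in nhds (θ₀, σstarsq), 0 < γ.2 :=
    (continuous_snd.tendsto (θ₀, σstarsq)).eventually (eventually_gt_nhds hσstar)
  -- the decomposition
  have hev : (fun γ : EuclideanSpace ℝ (Fin p) × ℝ =>
        KL γ - ((1 / (2 * σstarsq)) * Q₂ (γ.1 - θ₀) + (γ.2 - σstarsq)^2 / (4 * σstarsq^2)))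
      =ᶠ[nhds (θ₀, σstarsq)]
      (fun γ : EuclideanSpace ℝ (Fin p) × ℝ =>
        (Real.log (Real.sqrt γ.2) - Real.log (Real.sqrt σstarsq)
            + σstarsq / (2 * γ.2) - 1/2 - (γ.2 - σstarsq)^2 / (4 * σstarsq^2))
          + Q₂ (γ.1 - θ₀) * (1 / (2 * γ.2) - 1 / (2 * σstarsq))
          + (Fθ γ.1 - Fθ θ₀ - Q₂ (γ.1 - θ₀)) * (1 / (2 * γ.2))) := by
    filter_upwards [hev2] with γ hγ2
    have hKLγ : KL γ = Real.log (Real.sqrt γ.2) - Real.log (Real.sqrt σstarsq)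
        + (σ0sq + Fθ γ.1) / (2 * γ.2) - (σ0sq + Fθ θ₀) / (2 * σstarsq) := by
      have := hKL γ.1 γ.2 hγ2
      rw [Prod.mk.eta] at this
      exact this
    rw [hKLγ]
    have hσ0eq : σ0sq = σstarsq - Fθ θ₀ := by rw [hsigma]; ring
    rw [hσ0eq]
    field_simp
    ring
  refine Filter.EventuallyEq.trans_isLittleO hev ?_
  -- part 1
  have o1 : (fun γ : EuclideanSpace ℝ (Fin p) × ℝ =>
      Real.log (Real.sqrt γ.2) - Real.log (Real.sqrt σstarsq)
        + σstarsq / (2 * γ.2) - 1/2 - (γ.2 - σstarsq)^2 / (4 * σstarsq^2))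
      =o[nhds (θ₀, σstarsq)]
      (fun γ : EuclideanSpace ℝ (Fin p) × ℝ => ‖γ - (θ₀, σstarsq)‖^2) := by
    have h := (sigma_taylor σstarsq hσstar).comp_tendsto
      (continuous_snd.tendsto (θ₀, σstarsq))
    refine h.trans_isBigO ?_
    refine Asymptotics.isBigO_of_le _ (fun γ => ?_)
    have h1 : |γ.2 - σstarsq| ≤ ‖γ - (θ₀, σstarsq)‖ := by
      have h2 := norm_snd_le (γ - (θ₀, σstarsq))
      simpa using h2
    simp only [Function.comp]
    rw [Real.norm_of_nonneg (sq_nonneg _), Real.norm_of_nonneg (sq_nonneg _), ← sq_abs]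
    exact pow_le_pow_left₀ (abs_nonneg _) h1 2
  -- part 2
  obtain ⟨M, hM0, hM⟩ := Q2_bound hf hf₀ hgc θ₀
  have bigQ : (fun γ : EuclideanSpace ℝ (Fin p) × ℝ => Q₂ (γ.1 - θ₀))
      =O[nhds (θ₀, σstarsq)]
      (fun γ : EuclideanSpace ℝ (Fin p) × ℝ => ‖γ - (θ₀, σstarsq)‖^2) := by
    rw [Asymptotics.isBigO_iff]
    refine ⟨M, Filter.Eventually.of_forall (fun γ => ?_)⟩
    have h1 : ‖γ.1 - θ₀‖ ≤ ‖γ - (θ₀, σstarsq)‖ := by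
      have h2 := norm_fst_le (γ - (θ₀, σstarsq))
      simpa using h2
    calc ‖Q₂ (γ.1 - θ₀)‖ ≤ M * ‖γ.1 - θ₀‖^2 := hM (γ.1 - θ₀)
      _ ≤ M * ‖γ - (θ₀, σstarsq)‖^2 := by
          apply mul_le_mul_of_nonneg_left _ hM0
          exact pow_le_pow_left₀ (norm_nonneg _) h1 2
      _ = M * ‖‖γ - (θ₀, σstarsq)‖^2‖ := by
          rw [Real.norm_of_nonneg (sq_nonneg _)]
  have tendsto_inv2 : Filter.Tendsto (fun γ : EuclideanSpace ℝ (Fin p) × ℝ => 1 / (2 * γ.2))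
      (nhds (θ₀, σstarsq)) (nhds (1 / (2 * σstarsq))) := by
    apply Filter.Tendsto.div tendsto_const_nhds
    · exact (continuous_const.mul continuous_snd).tendsto (θ₀, σstarsq)
    · positivity
  have lit : (fun γ : EuclideanSpace ℝ (Fin p) × ℝ => 1 / (2 * γ.2) - 1 / (2 * σstarsq))
      =o[nhds (θ₀, σstarsq)] (fun _ => (1:ℝ)) := by
    rw [Asymptotics.isLittleO_one_iff]
    have := tendsto_inv2.sub (tendsto_const_nhds
      (x := (1 / (2 * σstarsq) : ℝ)) (f := nhds (θ₀, σstarsq)))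
    simpa using this
  have o2 := bigQ.mul_isLittleO lit
  simp only [mul_one] at o2
  -- part 3
  have oR := (theta_part hf hf₀ hgc hstat).comp_tendsto
    (continuous_fst.tendsto (θ₀, σstarsq))
  have oR2 : (fun γ : EuclideanSpace ℝ (Fin p) × ℝ => Fθ γ.1 - Fθ θ₀ - Q₂ (γ.1 - θ₀))
      =o[nhds (θ₀, σstarsq)]
      (fun γ : EuclideanSpace ℝ (Fin p) × ℝ => ‖γ - (θ₀, σstarsq)‖^2) := by
    refine Asymptotics.IsLittleO.trans_isBigO oR ?_
    refine Asymptotics.isBigO_of_le _ (fun γ => ?_)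
    simp only [Function.comp]
    have h1 : ‖γ.1 - θ₀‖ ≤ ‖γ - (θ₀, σstarsq)‖ := by
      have h2 := norm_fst_le (γ - (θ₀, σstarsq))
      simpa using h2
    rw [Real.norm_of_nonneg (sq_nonneg _), Real.norm_of_nonneg (sq_nonneg _)]
    exact pow_le_pow_left₀ (norm_nonneg _) h1 2
  have bigO1 : (fun γ : EuclideanSpace ℝ (Fin p) × ℝ => 1 / (2 * γ.2))
      =O[nhds (θ₀, σstarsq)] (fun _ => (1:ℝ)) := tendsto_inv2.isBigO_one ℝ
  have o3 := oR2.mul_isBigO bigO1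
  simp only [mul_one] at o3
  exact (o1.add o2).add o3
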